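/- Let (μ(n))_{n≥0} be a sequence in a field with μ(0)=1 such that all Hankel determinants H_n = det(μ(i+j))_{i,j=0}^{n-1} are nonzero. Define p(n,j) = D_j(0,n)/D_n(0,n), where D_j(a,b) is the determinant of the (b-a)×(b-a) matrix whose rows are (μ(a+r),...,μ(j-1+r),μ(j+1+r),...,μ(b+r)) for r=0,...,b-a-1 (i.e., the Hankel-type matrix with column index j omitted). Then for all m,n ≥ 1: det(μ(i+j))_{i,j=0}^{m-1} · det(p(i+m,j))_{i,j=0}^{n-1} = det(μ(i+j+n))_{i,j=0}^{m-1}. -/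

import Mathlib

/-- `Dm μ a b j` : determinant of the `(b-a)×(b-a)` Hankel-type matrix on
`μ a, …, μ b` with the column containing `μ j` (in the top row) deleted;
`0` if `j < a` or `j > b`. -/
noncomputable def Dm {F : Type*} [Field F] (μ : ℕ → F) (a b j : ℕ) : F :=
  if a ≤ j ∧ j ≤ b then
    Matrix.det (Matrix.of fun r c : Fin (b - a) =>
      μ (a + (r : ℕ) + (if (c : ℕ) < j - a then (c : ℕ) else (c : ℕ) + 1)))
  else 0

namespace Cigler

open Matrix Finset Equiv

variable {F : Type*} [Field F] (μ : ℕ → F)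

/-- Hankel determinant -/
noncomputable def HD (k : ℕ) : F :=
  Matrix.det (Matrix.of fun i j : Fin k => μ (i + j))

/-- cofactor-expansion sum -/
noncomputable def Scof (K N : ℕ) : F :=
  ∑ j ∈ Finset.range (N + 1), (-1 : F) ^ j * μ (K + j) * Dm μ 0 N j

lemma Dm_eq {N j : ℕ} (hj : j ≤ N) :
    Dm μ 0 N j = Matrix.det (Matrix.of fun r c : Fin N =>
      μ ((r : ℕ) + (if (c : ℕ) < j then (c : ℕ) else (c : ℕ) + 1))) := by
  rw [Dm, if_pos ⟨Nat.zero_le _, hj⟩]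
  exact congrArg Matrix.det (by ext r c; simp)

lemma Dm_zero_of_gt {N j : ℕ} (h : N < j) : Dm μ 0 N j = 0 := by
  rw [Dm, if_neg]; omega

lemma Dm_diag (N : ℕ) : Dm μ 0 N N = HD μ N := by
  rw [Dm_eq μ le_rfl, HD]
  exact congrArg Matrix.det (by ext r c; simp [c.isLt])

/-- the matrix whose first row is `μ (K + ·)` and whose remaining rows are the
Hankel rows `μ (r + ·)`, `r = 0, …, N-1`. -/
noncomputable def Qmat (K N : ℕ) : Matrix (Fin (N + 1)) (Fin (N + 1)) F :=
  Matrix.of fun r c => μ ((if (r : ℕ) = 0 then K else (r : ℕ) - 1) + (c : ℕ))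

lemma val_succAbove {N : ℕ} (j : Fin (N + 1)) (c : Fin N) :
    ((j.succAbove c : Fin (N + 1)) : ℕ) =
      if (c : ℕ) < (j : ℕ) then (c : ℕ) else (c : ℕ) + 1 := by
  have h : (Fin.castSucc c < j) ↔ ((c : ℕ) < (j : ℕ)) := by
    rw [Fin.lt_def, Fin.coe_castSucc]
  by_cases hc : (c : ℕ) < (j : ℕ)
  · rw [Fin.succAbove, if_pos (h.mpr hc), if_pos hc, Fin.coe_castSucc]
  · rw [Fin.succAbove, if_neg (fun hh => hc (h.mp hh)), if_neg hc, Fin.val_succ]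

lemma Scof_eq_det (K N : ℕ) : Scof μ K N = (Qmat μ K N).det := by
  rw [det_succ_row_zero]
  have h : ∀ j : Fin (N + 1),
      (-1 : F) ^ (j : ℕ) * (Qmat μ K N) 0 j *
        ((Qmat μ K N).submatrix Fin.succ j.succAbove).det =
      (-1 : F) ^ (j : ℕ) * μ (K + (j : ℕ)) * Dm μ 0 N (j : ℕ) := by
    intro j
    have h3 : (Qmat μ K N) 0 j = μ (K + (j : ℕ)) := by simp [Qmat]
    have h2 : ((Qmat μ K N).submatrix Fin.succ j.succAbove).det = Dm μ 0 N (j : ℕ) := by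
      rw [Dm_eq μ (Fin.is_le j)]
      refine congrArg Matrix.det ?_
      ext r c
      simp only [Matrix.submatrix_apply, Qmat, Matrix.of_apply, Fin.val_succ,
        Nat.add_sub_cancel]
      rw [if_neg (by omega), val_succAbove]
    rw [h2, h3]
  rw [Finset.sum_congr rfl (fun j _ => h j)]
  rw [Fin.sum_univ_eq_sum_range (fun t => (-1 : F) ^ t * μ (K + t) * Dm μ 0 N t)]
  rfl

lemma Scof_zero {K N : ℕ} (h : K < N) : Scof μ K N = 0 := by
  rw [Scof_eq_det]
  refine Matrix.det_zero_of_row_eq (i := 0) (j := ⟨K + 1, by omega⟩) ?_ ?_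
  · intro hc; have := congrArg Fin.val hc; simp at this
  · funext c
    simp [Qmat]

lemma Scof_diag (N : ℕ) : Scof μ N N = (-1 : F) ^ N * HD μ (N + 1) := by
  rw [Scof_eq_det]
  have hQ : Qmat μ N N =
      (Matrix.of fun i j : Fin (N + 1) => μ ((i : ℕ) + (j : ℕ))).submatrix
        ((finRotate (N + 1)).symm : Equiv.Perm (Fin (N + 1))) id := by
    ext i c
    simp only [Qmat, Matrix.of_apply, Matrix.submatrix_apply, id]
    congr 2
    by_cases h : (i : ℕ) = 0
    · have hi : i = 0 := Fin.ext h
      have : (finRotate (N + 1)).symm 0 = Fin.last N := by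
        rw [Equiv.symm_apply_eq, finRotate_last]
      rw [hi, this]
      simp
    · have hilt := i.isLt
      have hv : (i : ℕ) - 1 < N + 1 := by omega
      have hx : (finRotate (N + 1)).symm i = ⟨(i : ℕ) - 1, hv⟩ := by
        rw [Equiv.symm_apply_eq]
        apply Fin.ext
        rw [finRotate_succ_apply, Fin.val_add, Fin.val_one',
          Nat.mod_eq_of_lt (show 1 < N + 1 by omega),
          Nat.mod_eq_of_lt (show (i : ℕ) - 1 + 1 < N + 1 by omega)]
        omega
      rw [hx, if_neg h]
  rw [hQ, Matrix.det_permute, Equiv.Perm.sign_symm, sign_finRotate]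
  rw [HD]
  norm_num

lemma sum_Dm {M N K : ℕ} (h : N + 1 ≤ M) :
    ∑ k : Fin M, (-1 : F) ^ (k : ℕ) * Dm μ 0 N (k : ℕ) * μ ((k : ℕ) + K) =
      Scof μ K N := by
  rw [Fin.sum_univ_eq_sum_range (fun t => (-1 : F) ^ t * Dm μ 0 N t * μ (t + K))]
  rw [Scof, Finset.sum_subset (Finset.range_subset_range.mpr h)
    (fun t _ ht => by
      rw [Dm_zero_of_gt μ (by simp at ht; omega)]; ring)]
  exact Finset.sum_congr rfl fun t _ => by rw [add_comm t K]; ring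

lemma telescope (hH : ∀ k, HD μ k ≠ 0) (m : ℕ) :
    ∀ n, HD μ m * ∏ i ∈ Finset.range n, (HD μ (i + m + 1) / HD μ (i + m)) =
      HD μ (n + m) := by
  intro n
  induction n with
  | zero => simp
  | succ n ih =>
    rw [Finset.prod_range_succ, ← mul_assoc, ih, mul_comm,
      div_mul_cancel₀ _ (by rw [add_comm n m]; exact hH _)]
    congr 1
    omega

open Fin.NatCast in
lemma sign_addLeft_fin (N : ℕ) [NeZero N] (k : ℕ) :
    Equiv.Perm.sign (Equiv.addLeft ((k : ℕ) : Fin N)) = (-1) ^ ((N - 1) * k) := by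
  obtain ⟨M, rfl⟩ : ∃ M, N = M + 1 := ⟨N - 1, Nat.succ_pred_eq_of_pos (Nat.pos_of_ne_zero (NeZero.ne N)) |>.symm⟩
  simp only [Nat.add_sub_cancel]
  induction k with
  | zero =>
    have h0 : (Equiv.addLeft ((0 : ℕ) : Fin (M + 1))) = Equiv.refl _ := by
      ext x; simp
    rw [h0]
    simp
  | succ k ih =>
    have hstep : (Equiv.addLeft (((k + 1 : ℕ)) : Fin (M + 1))) =
        (Equiv.addLeft ((1 : ℕ) : Fin (M + 1))).trans
          (Equiv.addLeft ((k : ℕ) : Fin (M + 1))) := by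
      ext x
      simp only [Equiv.coe_addLeft, Equiv.trans_apply]
      push_cast
      rw [add_assoc]
    have hmul : (Equiv.addLeft ((1 : ℕ) : Fin (M + 1))).trans
        (Equiv.addLeft ((k : ℕ) : Fin (M + 1))) =
        (Equiv.addLeft ((k : ℕ) : Fin (M + 1))) *
          (Equiv.addLeft ((1 : ℕ) : Fin (M + 1))) := rfl
    have h1 : (Equiv.addLeft ((1 : ℕ) : Fin (M + 1))) = finRotate (M + 1) := by
      ext x
      rw [finRotate_succ_apply]
      simp [add_comm]
    rw [hstep, hmul, _root_.map_mul, ih, h1, sign_finRotate, ← pow_add, Nat.mul_succ, Nat.add_sub_cancel]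

section Main

variable (m n : ℕ)

noncomputable def A11 : Matrix (Fin n) (Fin n) F := Matrix.of fun i j =>
  (-1 : F) ^ ((i : ℕ) + m + (j : ℕ)) *
    (Dm μ 0 ((i : ℕ) + m) (j : ℕ) / Dm μ 0 ((i : ℕ) + m) ((i : ℕ) + m))

noncomputable def A12 : Matrix (Fin n) (Fin m) F := Matrix.of fun i j =>
  (-1 : F) ^ ((i : ℕ) + m + (n + (j : ℕ))) *
    (Dm μ 0 ((i : ℕ) + m) (n + (j : ℕ)) / Dm μ 0 ((i : ℕ) + m) ((i : ℕ) + m))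

noncomputable def G11 : Matrix (Fin n) (Fin n) F := Matrix.of fun i j =>
  μ ((i : ℕ) + (m + (j : ℕ)))

noncomputable def G12 : Matrix (Fin n) (Fin m) F := Matrix.of fun i j =>
  μ ((i : ℕ) + (j : ℕ))

noncomputable def G21 : Matrix (Fin m) (Fin n) F := Matrix.of fun i j =>
  μ ((n + (i : ℕ)) + (m + (j : ℕ)))

noncomputable def G22 : Matrix (Fin m) (Fin m) F := Matrix.of fun i j =>
  μ ((n + (i : ℕ)) + (j : ℕ))

lemma key (i : Fin n) (K : ℕ) :
    (∑ k : Fin n, A11 μ m n i k * μ ((k : ℕ) + K)) +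
      (∑ k : Fin m, A12 μ m n i k * μ ((n + (k : ℕ)) + K)) =
    (-1 : F) ^ ((i : ℕ) + m) * Scof μ K ((i : ℕ) + m) /
      Dm μ 0 ((i : ℕ) + m) ((i : ℕ) + m) := by
  have hi : ((i : ℕ) + m) + 1 ≤ n + m := by have := i.isLt; omega
  rw [← sum_Dm μ hi]
  rw [Fin.sum_univ_add (f := fun k : Fin (n + m) =>
    (-1 : F) ^ (k : ℕ) * Dm μ 0 ((i : ℕ) + m) (k : ℕ) * μ ((k : ℕ) + K))]
  rw [mul_add, add_div]
  congr 1
  · rw [Finset.mul_sum, Finset.sum_div]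
    refine Finset.sum_congr rfl fun k _ => ?_
    simp only [A11, Matrix.of_apply, Fin.coe_castAdd]
    rw [pow_add ((-1:F)) ((i : ℕ) + m) (k : ℕ)]
    ring
  · rw [Finset.mul_sum, Finset.sum_div]
    refine Finset.sum_congr rfl fun k _ => ?_
    simp only [A12, Matrix.of_apply, Fin.coe_natAdd]
    rw [pow_add ((-1:F)) ((i : ℕ) + m) (n + (k : ℕ))]
    ring

lemma T_entry (i j : Fin n) :
    (A11 μ m n * G11 μ m n + A12 μ m n * G21 μ m n) i j =
    (-1 : F) ^ ((i : ℕ) + m) * Scof μ (m + (j : ℕ)) ((i : ℕ) + m) /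
      Dm μ 0 ((i : ℕ) + m) ((i : ℕ) + m) := by
  simp only [Matrix.add_apply, Matrix.mul_apply, G11, G21, Matrix.of_apply]
  exact key μ m n i (m + (j : ℕ))

lemma Z_zero : A11 μ m n * G12 μ m n + A12 μ m n * G22 μ m n = 0 := by
  ext i j
  simp only [Matrix.add_apply, Matrix.mul_apply, G12, G22, Matrix.of_apply,
    Matrix.zero_apply]
  rw [key μ m n i (j : ℕ), Scof_zero μ (show (j : ℕ) < (i : ℕ) + m by
    have := j.isLt; omega)]
  simp

lemma detT :
    (A11 μ m n * G11 μ m n + A12 μ m n * G21 μ m n).det =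
      ∏ i : Fin n, (HD μ ((i : ℕ) + m + 1) / HD μ ((i : ℕ) + m)) := by
  rw [Matrix.det_of_upperTriangular (by
    intro i j hij
    rw [T_entry, Scof_zero μ (show m + (j : ℕ) < (i : ℕ) + m by
      have hij' : (j : ℕ) < (i : ℕ) := hij
      omega)]
    simp)]
  refine Finset.prod_congr rfl fun i _ => ?_
  rw [T_entry, add_comm m (i : ℕ), Scof_diag, Dm_diag, ← mul_assoc, ← pow_add,
    Even.neg_one_pow ⟨(i : ℕ) + m, rfl⟩, one_mul]

lemma detA :
    (Matrix.fromBlocks (A11 μ m n) (A12 μ m n) 0 (1 : Matrix (Fin m) (Fin m) F)).det =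
    (-1 : F) ^ (m * n) * Matrix.det (Matrix.of fun i j : Fin n =>
      Dm μ 0 ((i : ℕ) + m) (j : ℕ) / Dm μ 0 ((i : ℕ) + m) ((i : ℕ) + m)) := by
  rw [Matrix.det_fromBlocks_zero₂₁, Matrix.det_one, mul_one]
  have hA : A11 μ m n = Matrix.of (fun i j : Fin n => (-1 : F) ^ ((i : ℕ) + m) *
      (Matrix.of (fun i j : Fin n => (-1 : F) ^ ((j : ℕ)) *
        (Matrix.of fun i j : Fin n =>
          Dm μ 0 ((i : ℕ) + m) (j : ℕ) / Dm μ 0 ((i : ℕ) + m) ((i : ℕ) + m)) i j)) i j) := by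
    ext i j
    simp only [A11, Matrix.of_apply]
    rw [pow_add ((-1:F)) ((i : ℕ) + m) (j : ℕ)]
    ring
  rw [hA, Matrix.det_mul_column, Matrix.det_mul_row, ← mul_assoc]
  congr 1
  have hones : (∏ i : Fin n, (-1 : F) ^ ((i : ℕ))) *
      (∏ i : Fin n, (-1 : F) ^ ((i : ℕ))) = 1 := by
    rw [← Finset.prod_mul_distrib]
    exact Finset.prod_eq_one fun i _ => by rw [← pow_add]; exact Even.neg_one_pow ⟨_, rfl⟩
  calc (∏ i : Fin n, (-1 : F) ^ ((i : ℕ) + m)) * ∏ j : Fin n, (-1 : F) ^ ((j : ℕ))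
      = ((∏ i : Fin n, (-1 : F) ^ ((i : ℕ))) * ((-1 : F) ^ m) ^ n) *
          ∏ j : Fin n, (-1 : F) ^ ((j : ℕ)) := by
        rw [show (∏ i : Fin n, (-1 : F) ^ ((i : ℕ) + m)) =
            ∏ i : Fin n, ((-1 : F) ^ ((i : ℕ)) * (-1 : F) ^ m) from
          Finset.prod_congr rfl fun i _ => pow_add _ _ _,
          Finset.prod_mul_distrib, Finset.prod_const, Finset.card_univ,
          Fintype.card_fin]
    _ = ((-1 : F) ^ m) ^ n * ((∏ i : Fin n, (-1 : F) ^ ((i : ℕ))) *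
          ∏ j : Fin n, (-1 : F) ^ ((j : ℕ))) := by ring
    _ = (-1 : F) ^ (m * n) := by rw [hones, mul_one, ← pow_mul]

def eσ : Fin n ⊕ Fin m ≃ Fin (n + m) := finSumFinEquiv

def fσ : Fin n ⊕ Fin m ≃ Fin (n + m) :=
  (Equiv.sumComm _ _).trans (finSumFinEquiv.trans (finCongr (Nat.add_comm m n)))

lemma heL (i : Fin n) : ((eσ m n) (Sum.inl i) : ℕ) = (i : ℕ) := by simp [eσ]
lemma heR (j : Fin m) : ((eσ m n) (Sum.inr j) : ℕ) = n + (j : ℕ) := by simp [eσ]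
lemma hfL (i : Fin n) : ((fσ m n) (Sum.inl i) : ℕ) = m + (i : ℕ) := by simp [fσ]; omega
lemma hfR (j : Fin m) : ((fσ m n) (Sum.inr j) : ℕ) = (j : ℕ) := by simp [fσ]

lemma hGsub :
    Matrix.fromBlocks (G11 μ m n) (G12 μ m n) (G21 μ m n) (G22 μ m n) =
      (Matrix.of fun i j : Fin (n + m) => μ ((i : ℕ) + (j : ℕ))).submatrix
        (eσ m n) (fσ m n) := by
  ext i j
  cases i <;> cases j <;>
    simp only [Matrix.fromBlocks_apply₁₁, Matrix.fromBlocks_apply₁₂,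
      Matrix.fromBlocks_apply₂₁, Matrix.fromBlocks_apply₂₂,
      Matrix.submatrix_apply, Matrix.of_apply, G11, G12, G21, G22,
      heL, heR, hfL, hfR]

open Fin.NatCast in
lemma detG (hm : 1 ≤ m) (hn : 1 ≤ n) :
    (Matrix.fromBlocks (G11 μ m n) (G12 μ m n) (G21 μ m n) (G22 μ m n)).det =
      (-1 : F) ^ (m * n) * HD μ (n + m) := by
  haveI : NeZero (n + m) := ⟨by omega⟩
  rw [hGsub]
  have hsub2 : (Matrix.of fun i j : Fin (n + m) =>
        μ ((i : ℕ) + (j : ℕ))).submatrix (eσ m n) (fσ m n) =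
      ((Matrix.of fun i j : Fin (n + m) => μ ((i : ℕ) + (j : ℕ))).submatrix
        (eσ m n) (eσ m n)).submatrix id ((fσ m n).trans (eσ m n).symm) := by
    ext i j
    simp [Matrix.submatrix_apply]
  rw [hsub2, Matrix.det_permute', Matrix.det_submatrix_equiv_self]
  have hρ : (((eσ m n).symm.trans ((fσ m n).trans (eσ m n).symm)).trans (eσ m n)) =
      (eσ m n).symm.trans (fσ m n) := by
    ext k
    simp
  have hsign := Equiv.Perm.sign_symm_trans_trans ((fσ m n).trans (eσ m n).symm) (eσ m n)
  rw [hρ] at hsign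
  have hmlt : m < n + m := by omega
  have hcast : (((m : ℕ) : Fin (n + m)) : ℕ) = m := by
    rw [Fin.val_natCast, Nat.mod_eq_of_lt hmlt]
  have hfx : ∀ x : Fin n ⊕ Fin m, (fσ m n) x = ((m : ℕ) : Fin (n + m)) + (eσ m n) x := by
    intro x
    cases x with
    | inl i =>
      apply Fin.ext
      rw [Fin.val_add, hcast, hfL, heL, Nat.mod_eq_of_lt (by have := i.isLt; omega)]
    | inr j =>
      apply Fin.ext
      rw [Fin.val_add, hcast, hfR, heR,
        show m + (n + (j : ℕ)) = (n + m) + (j : ℕ) from by omega,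
        Nat.add_mod_left, Nat.mod_eq_of_lt (by have := j.isLt; omega)]
  have haddf : (eσ m n).symm.trans (fσ m n) =
      Equiv.addLeft ((m : ℕ) : Fin (n + m)) := by
    ext k
    rw [Equiv.trans_apply, hfx, Equiv.apply_symm_apply, Equiv.coe_addLeft]
  rw [haddf] at hsign
  rw [← hsign, sign_addLeft_fin]
  have hpar : (-1 : F) ^ ((n + m - 1) * m) = (-1 : F) ^ (m * n) := by
    obtain ⟨m', rfl⟩ : ∃ m', m = m' + 1 := ⟨m - 1, by omega⟩
    rw [show (n + (m' + 1) - 1) * (m' + 1) = (m' + 1) * n + m' * (m' + 1) from by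
      rw [show n + (m' + 1) - 1 = n + m' from by omega]; ring]
    rw [pow_add, (Nat.even_mul_succ_self m').neg_one_pow, mul_one]
  rw [← hpar]
  norm_num [HD]

end Main

end Cigler

theorem cigler_conjecture {F : Type*} [Field F] (μ : ℕ → F) (hμ0 : μ 0 = 1)
    (hH : ∀ n : ℕ, Matrix.det (Matrix.of fun i j : Fin n => μ (i + j)) ≠ 0)
    (m n : ℕ) (hm : 1 ≤ m) (hn : 1 ≤ n) :
    Matrix.det (Matrix.of fun i j : Fin m => μ (i + j)) *
      Matrix.det (Matrix.of fun i j : Fin n =>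
        Dm μ 0 ((i : ℕ) + m) (j : ℕ) / Dm μ 0 ((i : ℕ) + m) ((i : ℕ) + m)) =
    Matrix.det (Matrix.of fun i j : Fin m => μ ((i : ℕ) + j + n)) := by
  classical
  have hH' : ∀ k, Cigler.HD μ k ≠ 0 := fun k => hH k
  have e1 := Matrix.det_mul
    (Matrix.fromBlocks (Cigler.A11 μ m n) (Cigler.A12 μ m n) 0
      (1 : Matrix (Fin m) (Fin m) F))
    (Matrix.fromBlocks (Cigler.G11 μ m n) (Cigler.G12 μ m n)
      (Cigler.G21 μ m n) (Cigler.G22 μ m n))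
  have hAG : (Matrix.fromBlocks (Cigler.A11 μ m n) (Cigler.A12 μ m n) 0
        (1 : Matrix (Fin m) (Fin m) F)) *
      (Matrix.fromBlocks (Cigler.G11 μ m n) (Cigler.G12 μ m n)
        (Cigler.G21 μ m n) (Cigler.G22 μ m n)) =
      Matrix.fromBlocks
        (Cigler.A11 μ m n * Cigler.G11 μ m n + Cigler.A12 μ m n * Cigler.G21 μ m n) 0
        (Cigler.G21 μ m n) (Cigler.G22 μ m n) := by
    rw [Matrix.fromBlocks_multiply]
    simp only [Cigler.Z_zero, Matrix.zero_mul, Matrix.one_mul, zero_add]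
  rw [hAG, Matrix.det_fromBlocks_zero₁₂, Cigler.detA, Cigler.detG μ m n hm hn,
    Cigler.detT] at e1
  set DP := Matrix.det (Matrix.of fun i j : Fin n =>
    Dm μ 0 ((i : ℕ) + m) (j : ℕ) / Dm μ 0 ((i : ℕ) + m) ((i : ℕ) + m)) with hDP
  have hsq : ((-1 : F) ^ (m * n)) * ((-1 : F) ^ (m * n)) = 1 := by
    rw [← pow_add]; exact Even.neg_one_pow ⟨_, rfl⟩
  have e2 : ((-1 : F) ^ (m * n) * DP) * ((-1 : F) ^ (m * n) * Cigler.HD μ (n + m)) =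
      DP * Cigler.HD μ (n + m) := by
    rw [show ((-1 : F) ^ (m * n) * DP) * ((-1 : F) ^ (m * n) * Cigler.HD μ (n + m)) =
      (((-1 : F) ^ (m * n)) * ((-1 : F) ^ (m * n))) * (DP * Cigler.HD μ (n + m)) from by
        ring, hsq, one_mul]
  have e3 : DP * Cigler.HD μ (n + m) =
      (∏ i : Fin n, (Cigler.HD μ ((i : ℕ) + m + 1) / Cigler.HD μ ((i : ℕ) + m))) *
        (Cigler.G22 μ m n).det := by
    rw [← e2]
    exact e1.symm
  have htel : Cigler.HD μ m *
      (∏ i : Fin n, (Cigler.HD μ ((i : ℕ) + m + 1) / Cigler.HD μ ((i : ℕ) + m))) =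
      Cigler.HD μ (n + m) := by
    rw [Fin.prod_univ_eq_prod_range
      (fun t => Cigler.HD μ (t + m + 1) / Cigler.HD μ (t + m)) n]
    exact Cigler.telescope μ hH' m n
  have hG22 : (Cigler.G22 μ m n).det =
      Matrix.det (Matrix.of fun i j : Fin m => μ ((i : ℕ) + (j : ℕ) + n)) := by
    refine congrArg Matrix.det ?_
    ext i j
    simp only [Cigler.G22, Matrix.of_apply]
    congr 1
    omega
  show Cigler.HD μ m * DP = _
  refine mul_right_cancel₀ (hH' (n + m)) ?_
  rw [show (Cigler.HD μ m * DP) * Cigler.HD μ (n + m) =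
      Cigler.HD μ m * (DP * Cigler.HD μ (n + m)) from by ring, e3, ← mul_assoc, htel,
    ← hG22]
  ring
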